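/- There exist universal constants c₁, c₂ > 0 such that for every d ≥ 1 and every A ⊆ K, the cut function h' of the noise sparsifier H for G_d satisfies c₁ · k · Σ_S (f̂_A)_S² · min(|S|, √d) ≤ h'(A) ≤ c₂ · k · Σ_S (f̂_A)_S² · min(|S|, √d), where the sum is over all subsets S ⊆ {1,…,d} and k = 2^d. -/

import Mathlib

open Finset

/-- Vertices of the `d`-dimensional Boolean hypercube. -/
abbrev Cube (d : ℕ) := Fin d → Bool

/-- Hamming distance between two Boolean strings. -/
def hamm {d : ℕ} (s t : Cube d) : ℕ := (Finset.univ.filter fun i => s i ≠ t i).card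

/-- The vertex set of the graph `G_d`: `Sum.inl s` is the hypercube vertex `y_s`,
`Sum.inr s` is the terminal `z_s`. -/
abbrev Vtx (d : ℕ) := Cube d ⊕ Cube d

/-- Edge capacities of the graph `G_d`: hypercube edges (Hamming distance `1`) have
capacity `1`, each terminal `z_s` is attached to `y_s` by an edge of capacity `√d`. -/
noncomputable def gCap (d : ℕ) : Vtx d → Vtx d → ℝ
  | Sum.inl s, Sum.inl t => if hamm s t = 1 then 1 else 0
  | Sum.inl s, Sum.inr t => if s = t then Real.sqrt d else 0
  | Sum.inr s, Sum.inl t => if s = t then Real.sqrt d else 0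
  | Sum.inr _, Sum.inr _ => 0

/-- The cut function of a capacitated graph: total capacity of edges crossing `A`.
(Each unordered crossing edge `{u,v}` with `u ∈ A`, `v ∉ A` is counted once.) -/
noncomputable def cutFun {V : Type*} [Fintype V] [DecidableEq V]
    (c : V → V → ℝ) (A : Finset V) : ℝ :=
  ∑ u ∈ A, ∑ v ∈ Aᶜ, c u v

/-- The terminal set `K = {z_s}` of `G_d`. -/
def Kset (d : ℕ) : Finset (Vtx d) := Finset.univ.image Sum.inr

/-- The terminal cut function: `h_K(U) = min { h(A) : A ∩ K = U }`. -/
noncomputable def termCut {V : Type*} [Fintype V] [DecidableEq V]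
    (c : V → V → ℝ) (K U : Finset V) : ℝ :=
  sInf {x : ℝ | ∃ A : Finset V, A ∩ K = U ∧ cutFun c A = x}

/-- The terminal cut function of `G_d`, for a set `A` of terminals (identified with
Boolean strings). -/
noncomputable def hK (d : ℕ) (A : Finset (Cube d)) : ℝ :=
  termCut (gCap d) (Kset d) (A.image Sum.inr)

/-- The flip probability `p = (1 - ρ)/2` where `ρ = 1 - 1/√d`. -/
noncomputable def noiseP (d : ℕ) : ℝ := (1 - (1 - 1 / Real.sqrt d)) / 2

/-- Capacities of the noise sparsifier `H`:
`c_H(z_s, z_t) = √d · p^{Hamm(s,t)} · (1-p)^{d - Hamm(s,t)}` for `s ≠ t`. -/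
noncomputable def noiseCap (d : ℕ) (s t : Cube d) : ℝ :=
  if s = t then 0
  else Real.sqrt d * noiseP d ^ hamm s t * (1 - noiseP d) ^ (d - hamm s t)

/-- The character `χ_S(x) = Π_{i ∈ S} x_i`, with the Boolean value `true`
interpreted as `-1` and `false` as `+1`. -/
def chi {d : ℕ} (S : Finset (Fin d)) (x : Cube d) : ℝ := ∏ i ∈ S, (if x i then -1 else 1)

/-- The Fourier coefficient `f̂_S = E_x [f(x) χ_S(x)]`. -/
noncomputable def fCoeff {d : ℕ} (f : Cube d → ℝ) (S : Finset (Fin d)) : ℝ :=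
  (∑ x : Cube d, f x * chi S x) / 2 ^ d

/-- The `±1`-valued indicator function of a set `A` of terminals. -/
def fA {d : ℕ} (A : Finset (Cube d)) : Cube d → ℝ := fun s => if s ∈ A then 1 else -1

/-! ### Auxiliary material for the proof -/

section Aux

/-- `±1` value of a Boolean. -/
def sg (b : Bool) : ℝ := if b then -1 else 1

lemma chi_eq {d : ℕ} (S : Finset (Fin d)) (x : Cube d) : chi S x = ∏ i ∈ S, sg (x i) := rfl

lemma sg_mul_sg (a b : Bool) : sg a * sg b = if a = b then 1 else -1 := by
  cases a <;> cases b <;> simp [sg]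

lemma sum_cube {d : ℕ} (g : Fin d → Bool → ℝ) :
    ∑ s : Cube d, ∏ i, g i (s i) = ∏ i, (g i false + g i true) := by
  have h : ∀ i, g i false + g i true = ∑ b : Bool, g i b := by
    intro i; rw [Fintype.sum_bool]; ring
  simp only [h]
  rw [Finset.prod_univ_sum, Fintype.piFinset_univ]

/-- The correlation kernel `W(s,t) = ∏ᵢ (1 + r σ(sᵢ) σ(tᵢ))/2`. -/
noncomputable def W (d : ℕ) (r : ℝ) (s t : Cube d) : ℝ :=
  ∏ i, (1 + r * (sg (s i) * sg (t i))) / 2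

lemma W_symm {d : ℕ} (r : ℝ) (s t : Cube d) : W d r s t = W d r t s := by
  unfold W; apply Finset.prod_congr rfl; intro i _; rw [mul_comm (sg (s i))]

lemma W_eq_pow {d : ℕ} (r : ℝ) (s t : Cube d) :
    W d r s t = ((1-r)/2) ^ hamm s t * ((1+r)/2) ^ (d - hamm s t) := by
  unfold W
  have h1 : ∀ i, (1 + r * (sg (s i) * sg (t i))) / 2
      = if s i ≠ t i then (1-r)/2 else (1+r)/2 := by
    intro i; rw [sg_mul_sg]; split_ifs with h h2 h2 <;> simp_all <;> ring
  simp only [h1]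
  rw [Finset.prod_ite, Finset.prod_const, Finset.prod_const]
  have hcard : (Finset.univ.filter fun i => ¬ s i ≠ t i).card = d - hamm s t := by
    have := Finset.card_filter_add_card_filter_not
      (s := (Finset.univ : Finset (Fin d))) (p := fun i => s i ≠ t i)
    simp only [Finset.card_univ, Fintype.card_fin] at this
    unfold hamm; omega
  rw [hcard]; rfl

lemma W_expand {d : ℕ} (r : ℝ) (s t : Cube d) :
    W d r s t = ∑ S : Finset (Fin d), r ^ S.card * chi S s * chi S t * (2 ^ d)⁻¹ := by
  unfold W
  have h1 : ∀ i : Fin d, (1 + r * (sg (s i) * sg (t i))) / 2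
      = r * (sg (s i) * sg (t i)) * 2⁻¹ + 2⁻¹ := by intro i; ring
  simp only [h1]
  rw [Finset.prod_add]
  rw [Finset.powerset_univ]
  apply Finset.sum_congr rfl
  intro S _
  rw [Finset.prod_const]
  simp only [Finset.prod_mul_distrib, Finset.prod_const]
  rw [chi_eq, chi_eq, Finset.card_univ_diff, Fintype.card_fin]
  have hc : S.card ≤ d := by
    simpa using Finset.card_le_card (Finset.subset_univ S)
  have : (2:ℝ)⁻¹ ^ S.card * (2⁻¹ : ℝ) ^ (d - S.card) = (2 ^ d)⁻¹ := by
    rw [← pow_add, Nat.add_sub_cancel' hc, inv_pow]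
  rw [← this]; ring

lemma key_identity {d : ℕ} (r : ℝ) (f : Cube d → ℝ) :
    ∑ s : Cube d, ∑ t : Cube d, W d r s t * f s * f t
      = 2 ^ d * ∑ S : Finset (Fin d), r ^ S.card * fCoeff f S ^ 2 := by
  have step : ∀ S : Finset (Fin d), ∑ x : Cube d, f x * chi S x = fCoeff f S * 2 ^ d := by
    intro S
    rw [fCoeff, div_mul_cancel₀]
    positivity
  calc ∑ s : Cube d, ∑ t : Cube d, W d r s t * f s * f t
      = ∑ s : Cube d, ∑ t : Cube d, ∑ S : Finset (Fin d),
          (r ^ S.card * (2 ^ d)⁻¹) * ((f s * chi S s) * (f t * chi S t)) := by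
        apply Finset.sum_congr rfl; intro s _
        apply Finset.sum_congr rfl; intro t _
        rw [W_expand, Finset.sum_mul, Finset.sum_mul]
        apply Finset.sum_congr rfl; intro S _; ring
    _ = ∑ S : Finset (Fin d), ∑ s : Cube d, ∑ t : Cube d,
          (r ^ S.card * (2 ^ d)⁻¹) * ((f s * chi S s) * (f t * chi S t)) := by
        rw [show (∑ s : Cube d, ∑ t : Cube d, ∑ S : Finset (Fin d),
            (r ^ S.card * (2 ^ d)⁻¹) * ((f s * chi S s) * (f t * chi S t)))
            = ∑ s : Cube d, ∑ S : Finset (Fin d), ∑ t : Cube d,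
            (r ^ S.card * (2 ^ d)⁻¹) * ((f s * chi S s) * (f t * chi S t)) from
          Finset.sum_congr rfl fun s _ => Finset.sum_comm]
        exact Finset.sum_comm
    _ = ∑ S : Finset (Fin d),
          (r ^ S.card * (2 ^ d)⁻¹) * ((∑ x : Cube d, f x * chi S x) * (∑ x : Cube d, f x * chi S x)) := by
        apply Finset.sum_congr rfl; intro S _
        rw [Finset.sum_mul_sum, Finset.mul_sum]
        apply Finset.sum_congr rfl; intro s _
        rw [Finset.mul_sum]
    _ = _ := by
        rw [Finset.mul_sum]
        apply Finset.sum_congr rfl; intro S _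
        rw [step]
        have : (2:ℝ) ^ d ≠ 0 := by positivity
        field_simp

lemma W_one {d : ℕ} (s t : Cube d) : W d 1 s t = if s = t then 1 else 0 := by
  unfold W
  by_cases h : s = t
  · subst h
    rw [if_pos rfl]
    apply Finset.prod_eq_one
    intro i _
    rw [sg_mul_sg, if_pos rfl]; norm_num
  · rw [if_neg h]
    obtain ⟨i, hi⟩ : ∃ i, s i ≠ t i := by
      by_contra hc; push_neg at hc; exact h (funext hc)
    apply Finset.prod_eq_zero (Finset.mem_univ i)
    rw [sg_mul_sg, if_neg hi]; norm_num

lemma sum_W {d : ℕ} (r : ℝ) (s : Cube d) : ∑ t : Cube d, W d r s t = 1 := by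
  unfold W
  rw [sum_cube (fun i b => (1 + r * (sg (s i) * sg b)) / 2)]
  apply Finset.prod_eq_one
  intro i _
  simp [sg]; ring

lemma fA_sq {d : ℕ} (A : Finset (Cube d)) (s : Cube d) : fA A s * fA A s = 1 := by
  unfold fA; split_ifs <;> norm_num

lemma sum_WW {d : ℕ} (r : ℝ) : ∑ s : Cube d, ∑ t : Cube d, W d r s t = 2 ^ d := by
  simp only [sum_W]
  simp [Finset.card_univ]

lemma sum_W1_ff {d : ℕ} (A : Finset (Cube d)) :
    ∑ s : Cube d, ∑ t : Cube d, W d 1 s t * fA A s * fA A t = 2 ^ d := by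
  have h : ∀ s : Cube d, ∑ t : Cube d, W d 1 s t * fA A s * fA A t = 1 := by
    intro s
    rw [Finset.sum_eq_single s]
    · rw [W_one, if_pos rfl, one_mul, fA_sq]
    · intro t _ hts; rw [W_one, if_neg (Ne.symm hts)]; ring
    · intro hs; exact absurd (Finset.mem_univ s) hs
  simp only [h]
  simp [Finset.card_univ]

lemma parseval {d : ℕ} (A : Finset (Cube d)) :
    ∑ S : Finset (Fin d), fCoeff (fA A) S ^ 2 = 1 := by
  have h := key_identity (d := d) 1 (fA A)
  rw [sum_W1_ff] at h
  simp only [one_pow, one_mul] at h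
  have h2 : (2:ℝ)^d ≠ 0 := by positivity
  have h3 : (2:ℝ)^d * 1 = 2^d * ∑ S : Finset (Fin d), fCoeff (fA A) S ^ 2 := by
    rw [mul_one]; exact h
  exact (mul_left_cancel₀ h2 h3).symm

lemma cut_blocks {d : ℕ} (A : Finset (Cube d)) (r : ℝ) :
    ∑ s : Cube d, ∑ t : Cube d, W d r s t * (1 - fA A s * fA A t)
      = 4 * ∑ u ∈ A, ∑ v ∈ Aᶜ, W d r u v := by
  have hA : ∀ s ∈ A, fA A s = 1 := fun s hs => if_pos hs
  have hAc : ∀ s ∈ Aᶜ, fA A s = -1 := fun s hs => if_neg (Finset.mem_compl.mp hs)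
  have inner : ∀ s : Cube d, ∑ t : Cube d, W d r s t * (1 - fA A s * fA A t)
      = ∑ t ∈ A, W d r s t * (1 - fA A s * fA A t)
        + ∑ t ∈ Aᶜ, W d r s t * (1 - fA A s * fA A t) :=
    fun s => (Finset.sum_add_sum_compl A _).symm
  simp only [inner]
  rw [← Finset.sum_add_sum_compl A]
  rw [Finset.sum_add_distrib, Finset.sum_add_distrib]
  have e1 : ∑ s ∈ A, ∑ t ∈ A, W d r s t * (1 - fA A s * fA A t) = 0 := by
    apply Finset.sum_eq_zero; intro s hs
    apply Finset.sum_eq_zero; intro t ht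
    rw [hA s hs, hA t ht]; ring
  have e2 : ∑ s ∈ Aᶜ, ∑ t ∈ Aᶜ, W d r s t * (1 - fA A s * fA A t) = 0 := by
    apply Finset.sum_eq_zero; intro s hs
    apply Finset.sum_eq_zero; intro t ht
    rw [hAc s hs, hAc t ht]; ring
  have e3 : ∑ s ∈ A, ∑ t ∈ Aᶜ, W d r s t * (1 - fA A s * fA A t)
      = 2 * ∑ u ∈ A, ∑ v ∈ Aᶜ, W d r u v := by
    rw [Finset.mul_sum]
    apply Finset.sum_congr rfl; intro s hs
    rw [Finset.mul_sum]
    apply Finset.sum_congr rfl; intro t ht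
    rw [hA s hs, hAc t ht]; ring
  have e4 : ∑ s ∈ Aᶜ, ∑ t ∈ A, W d r s t * (1 - fA A s * fA A t)
      = 2 * ∑ u ∈ A, ∑ v ∈ Aᶜ, W d r u v := by
    have hswap : ∑ s ∈ Aᶜ, ∑ t ∈ A, W d r s t * (1 - fA A s * fA A t)
        = ∑ t ∈ A, ∑ s ∈ Aᶜ, W d r t s * (1 - fA A s * fA A t) := by
      rw [Finset.sum_comm]
      exact Finset.sum_congr rfl fun t _ => Finset.sum_congr rfl fun s _ => by rw [W_symm]
    rw [hswap, Finset.mul_sum]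
    apply Finset.sum_congr rfl; intro t ht
    rw [Finset.mul_sum]
    apply Finset.sum_congr rfl; intro s hs
    rw [hA t ht, hAc s hs]; ring
  rw [e1, e2, e3, e4]; ring

lemma cut_eq {d : ℕ} (A : Finset (Cube d)) :
    cutFun (noiseCap d) A = ∑ S : Finset (Fin d),
      2^d/4 * fCoeff (fA A) S ^ 2
        * (Real.sqrt d * (1 - (1 - 1/Real.sqrt d) ^ S.card)) := by
  set r := 1 - 1/Real.sqrt d with hr
  have h1 : noiseP d = (1 - r)/2 := by rw [hr]; simp only [noiseP]
  have h2 : 1 - noiseP d = (1 + r)/2 := by rw [h1]; ring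
  have hcap : ∀ u ∈ A, ∀ v ∈ Aᶜ, noiseCap d u v = Real.sqrt d * W d r u v := by
    intro u hu v hv
    have huv : u ≠ v := fun h => (Finset.mem_compl.mp hv) (h ▸ hu)
    rw [noiseCap, if_neg huv, W_eq_pow, ← h1, ← h2, mul_assoc]
  have step1 : cutFun (noiseCap d) A = Real.sqrt d * ∑ u ∈ A, ∑ v ∈ Aᶜ, W d r u v := by
    rw [cutFun, Finset.mul_sum]
    apply Finset.sum_congr rfl; intro u hu
    rw [Finset.mul_sum]
    exact Finset.sum_congr rfl fun v hv => hcap u hu v hv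
  have hsub : ∑ s : Cube d, ∑ t : Cube d, W d r s t * (1 - fA A s * fA A t)
      = 2^d - 2^d * ∑ S : Finset (Fin d), r ^ S.card * fCoeff (fA A) S ^ 2 := by
    have expand : ∀ s t : Cube d, W d r s t * (1 - fA A s * fA A t)
        = W d r s t - W d r s t * fA A s * fA A t := fun s t => by ring
    simp only [expand]
    simp only [Finset.sum_sub_distrib]
    rw [sum_WW, key_identity]
  have step2 : ∑ u ∈ A, ∑ v ∈ Aᶜ, W d r u v
      = 2^d/4 * ∑ S : Finset (Fin d), fCoeff (fA A) S ^ 2 * (1 - r ^ S.card) := by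
    have h4 := cut_blocks A r
    rw [hsub] at h4
    have e : ∑ S : Finset (Fin d), fCoeff (fA A) S ^ 2 * (1 - r ^ S.card)
        = (∑ S : Finset (Fin d), fCoeff (fA A) S ^ 2)
          - ∑ S : Finset (Fin d), r ^ S.card * fCoeff (fA A) S ^ 2 := by
      rw [← Finset.sum_sub_distrib]
      exact Finset.sum_congr rfl fun S _ => by ring
    rw [e, parseval]
    linarith [h4]
  rw [step1, step2, Finset.mul_sum, Finset.mul_sum]
  exact Finset.sum_congr rfl fun S _ => by ring

lemma exp_neg_le_half (x : ℝ) (h0 : 0 ≤ x) (h1 : x ≤ 1) : Real.exp (-x) ≤ 1 - x/2 := by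
  have hc := convexOn_exp.2 (Set.mem_univ (0:ℝ)) (Set.mem_univ (-1:ℝ))
    (by linarith : (0:ℝ) ≤ 1 - x) h0 (by ring)
  simp only [smul_eq_mul, mul_zero, mul_neg_one, zero_add, Real.exp_zero, mul_one] at hc
  have h2 : (2:ℝ) ≤ Real.exp 1 := by have := Real.add_one_le_exp 1; linarith
  have he : Real.exp (-1) ≤ 1/2 := by
    rw [Real.exp_neg]
    have := inv_anti₀ (by norm_num : (0:ℝ) < 2) h2
    linarith
  nlinarith

lemma bound_ub {d : ℕ} (hd : 1 ≤ d) (j : ℕ) :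
    Real.sqrt d * (1 - (1 - 1/Real.sqrt d) ^ j) ≤ min (j:ℝ) (Real.sqrt d) := by
  set q := Real.sqrt d with hq
  have hq1 : 1 ≤ q := by
    rw [hq, show (1:ℝ) = Real.sqrt 1 from (Real.sqrt_one).symm]
    exact Real.sqrt_le_sqrt (by exact_mod_cast hd)
  have hq0 : 0 < q := by linarith
  have hrange : 0 ≤ 1 - 1/q := by
    have : 1/q ≤ 1 := by rw [div_le_one hq0]; exact hq1
    linarith
  apply le_min
  · have hh : (-2:ℝ) ≤ -(1/q) := by
      have h5 : 0 < 1/q := by positivity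
      have h6 : 1/q ≤ 1 := by rw [div_le_one hq0]; exact hq1
      linarith
    have hb := one_add_mul_le_pow hh j
    have hb' : 1 - (j:ℝ)/q ≤ (1 - 1/q) ^ j := by
      have e : (1:ℝ) + (-(1/q)) = 1 - 1/q := by ring
      rw [e] at hb
      have e2 : (1:ℝ) + (j:ℝ) * (-(1/q)) = 1 - (j:ℝ)/q := by ring
      linarith [hb]
    have : 1 - (1 - 1/q)^j ≤ (j:ℝ)/q := by linarith
    calc q * (1 - (1 - 1/q)^j) ≤ q * ((j:ℝ)/q) := by nlinarith
      _ = (j:ℝ) := by field_simp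
  · have : (0:ℝ) ≤ (1 - 1/q)^j := pow_nonneg hrange j
    nlinarith

lemma bound_lb {d : ℕ} (hd : 1 ≤ d) (j : ℕ) :
    (1/2) * min (j:ℝ) (Real.sqrt d) ≤ Real.sqrt d * (1 - (1 - 1/Real.sqrt d) ^ j) := by
  set q := Real.sqrt d with hq
  have hq1 : 1 ≤ q := by
    rw [hq, show (1:ℝ) = Real.sqrt 1 from (Real.sqrt_one).symm]
    exact Real.sqrt_le_sqrt (by exact_mod_cast hd)
  have hq0 : 0 < q := by linarith
  have hrange : 0 ≤ 1 - 1/q := by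
    have : 1/q ≤ 1 := by rw [div_le_one hq0]; exact hq1
    linarith
  have hrexp : 1 - 1/q ≤ Real.exp (-(1/q)) := by
    have := Real.add_one_le_exp (-(1/q)); linarith
  have hpow : (1 - 1/q) ^ j ≤ Real.exp (-((j:ℝ)/q)) := by
    calc (1 - 1/q) ^ j ≤ Real.exp (-(1/q)) ^ j := pow_le_pow_left₀ hrange hrexp j
      _ = Real.exp ((j:ℝ) * (-(1/q))) := (Real.exp_nat_mul _ j).symm
      _ = Real.exp (-((j:ℝ)/q)) := by ring_nf
  rcases le_total (j:ℝ) q with h | h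
  · rw [min_eq_left h]
    have hx0 : 0 ≤ (j:ℝ)/q := by positivity
    have hx1 : (j:ℝ)/q ≤ 1 := by rw [div_le_one hq0]; exact h
    have hexp := exp_neg_le_half ((j:ℝ)/q) hx0 hx1
    have hj : (1 - 1/q)^j ≤ 1 - ((j:ℝ)/q)/2 := le_trans hpow hexp
    have hge : q * (1 - (1 - 1/q)^j) ≥ q * (((j:ℝ)/q)/2) := by nlinarith
    have e : q * (((j:ℝ)/q)/2) = (j:ℝ)/2 := by field_simp
    linarith [hge, e ▸ hge]
  · rw [min_eq_right h]
    have h2 : (2:ℝ) ≤ Real.exp 1 := by have := Real.add_one_le_exp 1; linarith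
    have he : Real.exp (-1) ≤ 1/2 := by
      rw [Real.exp_neg]
      have := inv_anti₀ (by norm_num : (0:ℝ) < 2) h2
      linarith
    have hm : Real.exp (-((j:ℝ)/q)) ≤ Real.exp (-1) := by
      apply Real.exp_le_exp.mpr
      have : 1 ≤ (j:ℝ)/q := by rw [le_div_iff₀ hq0]; linarith
      linarith
    have : (1 - 1/q)^j ≤ 1/2 := le_trans hpow (le_trans hm he)
    nlinarith

end Aux

/-- There are universal constants `c₁, c₂ > 0` such that for every
`d ≥ 1` and every `A ⊆ K`, the cut of the noise sparsifier satisfies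
`h'(A) = Θ(k · Σ_S f̂_S² min(|S|, √d))`. -/
theorem noise_sparsifier_cut_fourier :
    ∃ c₁ c₂ : ℝ, 0 < c₁ ∧ 0 < c₂ ∧ ∀ d : ℕ, 1 ≤ d → ∀ A : Finset (Cube d),
      c₁ * 2 ^ d *
          (∑ S : Finset (Fin d), fCoeff (fA A) S ^ 2 * min (S.card : ℝ) (Real.sqrt d))
        ≤ cutFun (noiseCap d) A ∧
      cutFun (noiseCap d) A ≤
        c₂ * 2 ^ d *
          (∑ S : Finset (Fin d), fCoeff (fA A) S ^ 2 * min (S.card : ℝ) (Real.sqrt d)) := by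
  refine ⟨1/8, 1/4, by norm_num, by norm_num, fun d hd A => ?_⟩
  have hcut := cut_eq A
  have hp : (0:ℝ) < 2^d := by positivity
  constructor
  · rw [hcut, Finset.mul_sum]
    apply Finset.sum_le_sum
    intro S _
    have hlb := bound_lb hd S.card
    have hf : (0:ℝ) ≤ fCoeff (fA A) S ^ 2 := sq_nonneg _
    nlinarith [mul_le_mul_of_nonneg_left hlb hf]
  · rw [hcut, Finset.mul_sum]
    apply Finset.sum_le_sum
    intro S _
    have hub := bound_ub hd S.card
    have hf : (0:ℝ) ≤ fCoeff (fA A) S ^ 2 := sq_nonneg _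
    nlinarith [mul_le_mul_of_nonneg_left hub hf]
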